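/- Let {(u,p(u)), (v,p(v)), (w,p(w))} be a 3-edge cut of a 3-edge-connected graph G consisting of three tree-edges of a DFS tree T, and suppose w has the smallest preorder number among u, v, w. Then w is an ancestor of both u and v in T. -/
import Mathlib


variable {V E : Type}

/-- Reachability in the multigraph with edge-endpoint map `ends`,
avoiding (i.e. after deleting) the edges in `S`. -/
def Reach (ends : E → V × V) (S : Set E) : V → V → Prop :=
  Relation.ReflTransGen (fun a b => ∃ e, e ∉ S ∧ (ends e = (a, b) ∨ ends e = (b, a)))

/-- The multigraph is connected. -/
def Connected (ends : E → V × V) : Prop := ∀ u v : V, Reach ends ∅ u v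

/-- `u` and `v` are `k`-edge-connected: no set of at most `k - 1` edges separates them. -/
def KConn (ends : E → V × V) (k : ℕ) (u v : V) : Prop :=
  ∀ S : Finset E, S.card ≤ k - 1 → Reach ends (↑S) u v

/-- The multigraph is `k`-edge-connected: no edge cut of size less than `k`. -/
def GraphKConn (ends : E → V × V) (k : ℕ) : Prop :=
  ∀ S : Finset E, S.card < k → ∀ u v : V, Reach ends (↑S) u v

/-- `S` is an edge cut: removing it disconnects the graph. -/
def IsCutSet (ends : E → V × V) (S : Set E) : Prop :=
  ∃ u v : V, ¬ Reach ends S u v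

/-- A (candidate) DFS tree on the multigraph `ends : E → V × V`: a root, a parent
function, a choice of a tree edge for each non-root vertex, and a preorder numbering. -/
structure DFSTree (V E : Type) where
  ends : E → V × V
  root : V
  parent : V → V
  treeEdge : V → E
  pre : V → ℕ

namespace DFSTree

variable (t : DFSTree V E)

/-- `t.Anc a b` : `a` is an ancestor of `b` (every vertex is an ancestor of itself). -/
def Anc (a b : V) : Prop :=
  Relation.ReflTransGen (fun x y => x ≠ t.root ∧ y = t.parent x) b a

/-- `a` is a proper ancestor of `b`. -/
def ProperAnc (a b : V) : Prop := t.Anc a b ∧ a ≠ b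

def IsTreeEdge (e : E) : Prop := ∃ v, v ≠ t.root ∧ e = t.treeEdge v

/-- The set `B(v)`: back-edges `(x, y)` with `x` a descendant of `v` and `y` a
proper ancestor of `v`. -/
def B (v : V) : Set E :=
  {e | ¬ t.IsTreeEdge e ∧ t.Anc v (t.ends e).1 ∧ t.ProperAnc (t.ends e).2 v}

/-- `m` is the nearest common ancestor of the set `S` of vertices. -/
def IsNCA (S : Set V) (m : V) : Prop :=
  (∀ x ∈ S, t.Anc m x) ∧ ∀ m' : V, (∀ x ∈ S, t.Anc m' x) → t.Anc m' m

/-- `m = M(v)`: the nearest common ancestor of all lower ends of back-edges in `B(v)`. -/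
def IsM (v m : V) : Prop := t.IsNCA {x | ∃ e ∈ t.B v, (t.ends e).1 = x} m

/-- `h = high(v)`: the highest (in preorder) upper end of a back-edge in `B(v)`. -/
def IsHigh (v h : V) : Prop :=
  (∃ e ∈ t.B v, (t.ends e).2 = h) ∧ ∀ e ∈ t.B v, t.pre (t.ends e).2 ≤ t.pre h

/-- `l = low(v)`: the lowest (in preorder) upper end of a back-edge in `B(v)`. -/
def IsLow (v l : V) : Prop :=
  (∃ e ∈ t.B v, (t.ends e).2 = l) ∧ ∀ e ∈ t.B v, t.pre l ≤ t.pre (t.ends e).2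

/-- `v` and `w` have the same `M`-value. -/
def SameM (v w : V) : Prop := ∃ m, t.IsM v m ∧ t.IsM w m

/-- `n = nextM(v)`: the greatest vertex smaller than `v` with the same `M`-value. -/
def IsNextM (v n : V) : Prop :=
  t.pre n < t.pre v ∧ t.SameM v n ∧
    ∀ z, t.pre z < t.pre v → t.SameM v z → t.pre z ≤ t.pre n

/-- `l = lastM(v)`: the smallest vertex with the same `M`-value as `v`. -/
def IsLastM (v l : V) : Prop :=
  t.SameM v l ∧ ∀ z, t.SameM v z → t.pre l ≤ t.pre z

/-- `t` really is a DFS spanning tree of the connected multigraph `ends`. -/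
structure IsDFS : Prop where
  conn : Connected t.ends
  parent_root : t.parent t.root = t.root
  tree_ends : ∀ v, v ≠ t.root → t.ends (t.treeEdge v) = (v, t.parent v)
  treeEdge_inj : ∀ v w, v ≠ t.root → w ≠ t.root → t.treeEdge v = t.treeEdge w → v = w
  back : ∀ e, ¬ t.IsTreeEdge e → t.Anc (t.ends e).2 (t.ends e).1
  pre_inj : Function.Injective t.pre
  pre_mono : ∀ a b, t.Anc a b → t.pre a ≤ t.pre b
  pre_interval : ∀ a b : V,
    t.pre a ≤ t.pre b → t.pre b < t.pre a + {x | t.Anc a x}.ncard → t.Anc a b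

end DFSTree

section AuxLemmas

variable {V E : Type}

/-- Odd number of the three propositions hold. -/
def OddP3 (A B C : Prop) : Prop :=
  (A ∧ B ∧ C) ∨ (A ∧ ¬B ∧ ¬C) ∨ (¬A ∧ B ∧ ¬C) ∨ (¬A ∧ ¬B ∧ C)

lemma oddP3_congr {A B C A' B' C' : Prop} (hA : A ↔ A') (hB : B ↔ B') (hC : C ↔ C') :
    OddP3 A B C ↔ OddP3 A' B' C' := by unfold OddP3; rw [hA, hB, hC]

lemma oddP3_flip {A B C A' B' C' : Prop} (hA : A) (hA' : ¬ A') (hB : B ↔ B') (hC : C ↔ C') :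
    OddP3 A B C ↔ ¬ OddP3 A' B' C' := by
  unfold OddP3
  rw [hB, hC, iff_true_intro hA, iff_false_intro hA']
  by_cases h1 : B' <;> by_cases h2 : C' <;> simp [h1, h2]

lemma oddP3_false {A B C : Prop} (hA : ¬A) (hB : ¬B) (hC : ¬C) : ¬ OddP3 A B C := by
  simp [OddP3, hA, hB, hC]

lemma oddP3_extract {A B C A' B' C' : Prop} (h : OddP3 A B C ↔ OddP3 A' B' C')
    (hA : A) (hA' : ¬ A') (hB : B' → B) (hC : C' → C) :
    (B ∧ ¬ B') ∨ (C ∧ ¬ C') := by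
  by_cases h1 : B <;> by_cases h2 : B' <;> by_cases h3 : C <;> by_cases h4 : C' <;>
    simp_all [OddP3]

lemma reach_symm {ends : E → V × V} {S : Set E} {a b : V} (h : Reach ends S a b) :
    Reach ends S b a := by
  induction h with
  | refl => exact Relation.ReflTransGen.refl
  | tail _ h2 ih =>
      obtain ⟨e, he, hor⟩ := h2
      exact Relation.ReflTransGen.head ⟨e, he, hor.symm⟩ ih

lemma reach_closed (ends : E → V × V) (S : Set E) (D : Set V)
    (hD : ∀ p q : V, ∀ e : E, e ∉ S → (ends e = (p, q) ∨ ends e = (q, p)) → p ∈ D → q ∈ D)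
    {a b : V} (h : Reach ends S a b) (ha : a ∈ D) : b ∈ D := by
  induction h with
  | refl => exact ha
  | tail _ h2 ih =>
      obtain ⟨e, he, hor⟩ := h2
      exact hD _ _ e he hor ih

lemma reach_cross (ends : E → V × V) (S : Set E) (D : Set V)
    {a b : V} (h : Reach ends S a b) (ha : a ∈ D) (hb : b ∉ D) :
    ∃ e p q, e ∉ S ∧ p ∈ D ∧ q ∉ D ∧ (ends e = (p, q) ∨ ends e = (q, p)) := by
  by_contra hno
  push_neg at hno
  refine hb (reach_closed ends S D ?_ h ha)
  intro p q e he hor hp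
  by_contra hq
  rcases hor with h' | h'
  · exact (hno e p q he hp hq).1 h'
  · exact (hno e p q he hp hq).2 h'

lemma rtg_total {α : Type*} {r : α → α → Prop} (hr : ∀ a b c, r a b → r a c → b = c)
    {a b c : α} (hab : Relation.ReflTransGen r a b) (hac : Relation.ReflTransGen r a c) :
    Relation.ReflTransGen r b c ∨ Relation.ReflTransGen r c b := by
  induction hab with
  | refl => exact Or.inl hac
  | tail _ h2 ih =>
      rcases ih with ih | ih
      · rcases Relation.ReflTransGen.cases_head ih with h | ⟨d, hd, h3⟩
        · exact Or.inr (h ▸ Relation.ReflTransGen.single h2)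
        · have : _ = d := hr _ _ _ h2 hd
          exact Or.inl (this ▸ h3)
      · exact Or.inr (ih.tail h2)

namespace DFSTree

variable {t : DFSTree V E}

lemma anc_refl {a : V} : t.Anc a a := Relation.ReflTransGen.refl

lemma anc_trans {a b c : V} (h1 : t.Anc a b) (h2 : t.Anc b c) : t.Anc a c :=
  Relation.ReflTransGen.trans h2 h1

lemma anc_step {z : V} (hz : z ≠ t.root) : t.Anc (t.parent z) z :=
  Relation.ReflTransGen.single ⟨hz, rfl⟩

lemma anc_cases {a z : V} (h : t.Anc a z) :
    a = z ∨ (z ≠ t.root ∧ t.Anc a (t.parent z)) := by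
  rcases Relation.ReflTransGen.cases_head h with h | ⟨c, ⟨hz, hc⟩, h2⟩
  · exact Or.inl h.symm
  · exact Or.inr ⟨hz, hc ▸ h2⟩

lemma anc_root_eq {a : V} (h : t.Anc a t.root) : a = t.root := by
  rcases Relation.ReflTransGen.cases_head h with h | ⟨c, ⟨hz, _⟩, _⟩
  · exact h.symm
  · exact absurd rfl hz

lemma anc_total {a b c : V} (h1 : t.Anc a c) (h2 : t.Anc b c) :
    t.Anc a b ∨ t.Anc b a :=
  Or.symm (rtg_total (fun _ _ _ h h' => h.2.trans h'.2.symm) h1 h2)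

lemma pre_lt (ht : t.IsDFS) {a b : V} (h : t.Anc a b) (hne : a ≠ b) :
    t.pre a < t.pre b :=
  lt_of_le_of_ne (ht.pre_mono _ _ h) (fun he => hne (ht.pre_inj he))

lemma anc_antisymm (ht : t.IsDFS) {a b : V} (h1 : t.Anc a b) (h2 : t.Anc b a) : a = b :=
  ht.pre_inj (le_antisymm (ht.pre_mono _ _ h1) (ht.pre_mono _ _ h2))

lemma anc_root (ht : t.IsDFS) (z : V) : t.Anc t.root z := by
  have h := ht.conn t.root z
  refine reach_closed t.ends ∅ {x | t.Anc t.root x} ?_ h anc_refl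
  intro p q e _ hor hp
  by_cases he : t.IsTreeEdge e
  · obtain ⟨m, hm, rfl⟩ := he
    rw [ht.tree_ends m hm] at hor
    rcases hor with h' | h' <;> injection h' with h1 h2
    · subst h1; subst h2
      rcases anc_cases hp with h | ⟨_, h⟩
      · exact absurd h.symm hm
      · exact h
    · subst h1; subst h2
      exact anc_trans hp (anc_step hm)
  · have hb := ht.back e he
    rcases hor with h' | h'
    · have hb' : t.Anc q p := by rw [h'] at hb; exact hb
      rcases anc_total hp hb' with h | h
      · exact h
      · have hq : q = t.root := anc_root_eq h
        rw [Set.mem_setOf_eq, hq]; exact anc_refl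
    · have hb' : t.Anc p q := by rw [h'] at hb; exact hb
      exact anc_trans hp hb'

lemma parent_ne (ht : t.IsDFS) {z : V} (hz : z ≠ t.root) : t.parent z ≠ z := by
  intro hpz
  have h := anc_root ht z
  have key : ∀ a : V, Relation.ReflTransGen (fun x y => x ≠ t.root ∧ y = t.parent x) z a →
      a = z := by
    intro a ha
    induction ha with
    | refl => rfl
    | tail _ h2 ih =>
        rcases h2 with ⟨_, rfl⟩
        rw [ih, hpz]
  exact hz (key t.root h).symm

lemma pre_parent_lt (ht : t.IsDFS) {z : V} (hz : z ≠ t.root) :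
    t.pre (t.parent z) < t.pre z :=
  pre_lt ht (anc_step hz) (parent_ne ht hz)

lemma anc_iff_parent {x z : V} (hz : z ≠ t.root) (hxz : x ≠ z) :
    t.Anc x z ↔ t.Anc x (t.parent z) := by
  constructor
  · intro h
    rcases anc_cases h with h | ⟨_, h⟩
    · exact absurd h hxz
    · exact h
  · intro h
    exact anc_trans h (anc_step hz)

lemma exists_back (ht : t.IsDFS) (h3 : GraphKConn t.ends 3) {x : V} (hx : x ≠ t.root) :
    ∃ e, ¬ t.IsTreeEdge e ∧ t.Anc x (t.ends e).1 ∧ t.ProperAnc (t.ends e).2 x := by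
  classical
  have hre : Reach t.ends (↑({t.treeEdge x} : Finset E)) x t.root :=
    h3 {t.treeEdge x} (by simp) x t.root
  have hrootD : t.root ∉ {z | t.Anc x z} := fun hc => hx (anc_root_eq hc)
  obtain ⟨e, p, q, he, hp, hq, hor⟩ :=
    reach_cross t.ends _ {z | t.Anc x z} hre anc_refl hrootD
  simp only [Finset.coe_singleton, Set.mem_singleton_iff] at he
  simp only [Set.mem_setOf_eq] at hp hq
  have hnt : ¬ t.IsTreeEdge e := by
    rintro ⟨m, hm, rfl⟩
    have hne : m ≠ x := fun h => he (by rw [h])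
    rw [ht.tree_ends m hm] at hor
    rcases hor with h' | h' <;> injection h' with h1 h2
    · subst h1; subst h2
      rcases anc_cases hp with h | ⟨_, h⟩
      · exact hne h.symm
      · exact hq h
    · subst h1; subst h2
      exact hq (anc_trans hp (anc_step hm))
  have hb := ht.back e hnt
  rcases hor with h' | h'
  · have hb' : t.Anc q p := by rw [h'] at hb; exact hb
    have h1 : t.ends e = (p, q) := h'
    have h2 : t.Anc q x := by
      rcases anc_total hp hb' with h | h
      · exact absurd h hq
      · exact h
    have h3 : q ≠ x := fun hqx => hq (hqx ▸ anc_refl)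
    exact ⟨e, hnt, by rw [h1]; exact hp, by rw [h1]; exact h2, by rw [h1]; exact h3⟩
  · have hb' : t.Anc p q := by rw [h'] at hb; exact hb
    exact absurd (anc_trans hp hb') hq

end DFSTree

end AuxLemmas

section KeyLemma

variable {V E : Type}

lemma oddP3_flip2 {A B C A' B' C' : Prop} (hB : B) (hB' : ¬ B') (hA : A ↔ A') (hC : C ↔ C') :
    OddP3 A B C ↔ ¬ OddP3 A' B' C' := by
  unfold OddP3
  rw [hA, hC, iff_true_intro hB, iff_false_intro hB']
  by_cases h1 : A' <;> by_cases h2 : C' <;> simp [h1, h2]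

lemma oddP3_flip3 {A B C A' B' C' : Prop} (hC : C) (hC' : ¬ C') (hA : A ↔ A') (hB : B ↔ B') :
    OddP3 A B C ↔ ¬ OddP3 A' B' C' := by
  unfold OddP3
  rw [hA, hB, iff_true_intro hC, iff_false_intro hC']
  by_cases h1 : A' <;> by_cases h2 : B' <;> simp [h1, h2]

lemma oddP3_extract3 {A B C A' B' C' : Prop} (h : OddP3 A B C ↔ OddP3 A' B' C')
    (hC : C) (hC' : ¬ C') (hA : A' → A) (hB : B' → B) :
    (A ∧ ¬ A') ∨ (B ∧ ¬ B') := by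
  by_cases h1 : A <;> by_cases h2 : A' <;> by_cases h3 : B <;> by_cases h4 : B' <;>
    simp_all [OddP3]

lemma iff_of_not_iff_not {A B : Prop} (h : ¬ (A ↔ ¬ B)) : A ↔ B := by tauto

set_option maxHeartbeats 1000000 in
lemma key_lemma (t : DFSTree V E) (ht : t.IsDFS) (h3 : GraphKConn t.ends 3) (u v w : V)
    (hu : u ≠ t.root) (hv : v ≠ t.root) (hw : w ≠ t.root)
    (huv : u ≠ v) (huw : u ≠ w) (hvw : v ≠ w)
    (hcut : IsCutSet t.ends {t.treeEdge u, t.treeEdge v, t.treeEdge w})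
    (hwu : t.pre w < t.pre u) (hwv : t.pre w < t.pre v) : t.Anc w u := by
  classical
  by_contra Hwu
  set S : Set E := {t.treeEdge u, t.treeEdge v, t.treeEdge w} with hS
  -- the set of vertices reachable from the root after deleting S
  have hrootD : Reach t.ends S t.root t.root := Relation.ReflTransGen.refl
  have stepD : ∀ {p q : V} (e : E), e ∉ S → (t.ends e = (p, q) ∨ t.ends e = (q, p)) →
      Reach t.ends S t.root p → Reach t.ends S t.root q :=
    fun e he hor hp => Relation.ReflTransGen.tail hp ⟨e, he, hor⟩
  -- some vertex is unreachable
  obtain ⟨a0, b0, hab⟩ := hcut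
  have hz0 : ∃ z, ¬ Reach t.ends S t.root z := by
    by_contra h
    push_neg at h
    exact hab ((reach_symm (h a0)).trans (h b0))
  obtain ⟨z0, hz0⟩ := hz0
  -- each of the three cut edges crosses the reachable set
  have Hcross : ∀ x : V, (x = u ∨ x = v ∨ x = w) → x ≠ t.root →
      (Reach t.ends S t.root x ↔ ¬ Reach t.ends S t.root (t.parent x)) := by
    intro x hx hxr
    by_contra hiff
    have hsame : Reach t.ends S t.root x ↔ Reach t.ends S t.root (t.parent x) :=
      iff_of_not_iff_not hiff
    have hxS : t.treeEdge x ∈ ({t.treeEdge u, t.treeEdge v, t.treeEdge w} : Finset E) := by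
      rcases hx with rfl | rfl | rfl <;> simp
    have hcard :
        (({t.treeEdge u, t.treeEdge v, t.treeEdge w} : Finset E).erase (t.treeEdge x)).card
          < 3 := by
      have h1 : ({t.treeEdge v, t.treeEdge w} : Finset E).card ≤ 2 :=
        (Finset.card_insert_le _ _).trans (by simp)
      have h2 : ({t.treeEdge u, t.treeEdge v, t.treeEdge w} : Finset E).card ≤ 3 :=
        (Finset.card_insert_le _ _).trans (by omega)
      have h4 := Finset.card_erase_of_mem hxS
      omega
    have hre := h3 _ hcard t.root z0
    refine hz0 (reach_closed t.ends _ {z | Reach t.ends S t.root z} ?_ hre hrootD)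
    intro p q e he hor hp
    simp only [Set.mem_setOf_eq] at hp ⊢
    by_cases heS : e ∈ S
    · have heS' : e = t.treeEdge u ∨ e = t.treeEdge v ∨ e = t.treeEdge w := by
        simpa [hS, Set.mem_insert_iff] using heS
      have hex : e = t.treeEdge x := by
        by_contra hne
        refine he ?_
        simp only [Finset.coe_erase, Set.mem_diff, Finset.mem_coe, Finset.mem_insert,
          Finset.mem_singleton, Set.mem_singleton_iff]
        exact ⟨heS', hne⟩
      subst hex
      have hends := ht.tree_ends x hxr
      rcases hor with h' | h' <;> rw [hends] at h' <;> injection h' with h1 h2 <;>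
        subst h1 <;> subst h2
      · exact hsame.mp hp
      · exact hsame.mpr hp
    · exact stepD e heS hor hp
  -- parity formula for reachability
  have hbase : Reach t.ends S t.root t.root ↔
      ¬ OddP3 (t.Anc u t.root) (t.Anc v t.root) (t.Anc w t.root) :=
    iff_of_true hrootD (oddP3_false (fun h => hu (DFSTree.anc_root_eq h))
      (fun h => hv (DFSTree.anc_root_eq h)) (fun h => hw (DFSTree.anc_root_eq h)))
  have hparity : ∀ z : V, (Reach t.ends S t.root z ↔
      ¬ OddP3 (t.Anc u z) (t.Anc v z) (t.Anc w z)) := by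
    have main : ∀ n : ℕ, ∀ z : V, t.pre z ≤ n → (Reach t.ends S t.root z ↔
        ¬ OddP3 (t.Anc u z) (t.Anc v z) (t.Anc w z)) := by
      intro n
      induction n with
      | zero =>
          intro z hz
          have h0 : t.pre t.root ≤ t.pre z := ht.pre_mono _ _ (DFSTree.anc_root ht z)
          have hzr : z = t.root := ht.pre_inj (by omega)
          subst hzr
          exact hbase
      | succ n ih =>
          intro z hz
          by_cases hzr : z = t.root
          · subst hzr; exact hbase
          · have hpz := DFSTree.pre_parent_lt ht hzr
            have ihp := ih (t.parent z) (by omega)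
            have hself : ¬ t.Anc z (t.parent z) := fun h =>
              absurd (ht.pre_mono _ _ h) (by omega)
            by_cases hzu : z = u
            · have hzu' : u = z := hzu.symm
              subst hzu'
              have hcr := Hcross u (Or.inl rfl) hzr
              have hflip : OddP3 (t.Anc u u) (t.Anc v u) (t.Anc w u) ↔
                  ¬ OddP3 (t.Anc u (t.parent u)) (t.Anc v (t.parent u))
                      (t.Anc w (t.parent u)) :=
                oddP3_flip DFSTree.anc_refl hself
                  (DFSTree.anc_iff_parent hzr (Ne.symm huv))
                  (DFSTree.anc_iff_parent hzr (Ne.symm huw))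
              rw [hcr, ihp, not_not, hflip, not_not]
            · by_cases hzv : z = v
              · have hzv' : v = z := hzv.symm
                subst hzv'
                have hcr := Hcross v (Or.inr (Or.inl rfl)) hzr
                have hflip : OddP3 (t.Anc u v) (t.Anc v v) (t.Anc w v) ↔
                    ¬ OddP3 (t.Anc u (t.parent v)) (t.Anc v (t.parent v))
                        (t.Anc w (t.parent v)) :=
                  oddP3_flip2 DFSTree.anc_refl hself
                    (DFSTree.anc_iff_parent hzr huv)
                    (DFSTree.anc_iff_parent hzr (Ne.symm hvw))
                rw [hcr, ihp, not_not, hflip, not_not]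
              · by_cases hzw : z = w
                · have hzw' : w = z := hzw.symm
                  subst hzw'
                  have hcr := Hcross w (Or.inr (Or.inr rfl)) hzr
                  have hflip : OddP3 (t.Anc u w) (t.Anc v w) (t.Anc w w) ↔
                      ¬ OddP3 (t.Anc u (t.parent w)) (t.Anc v (t.parent w))
                          (t.Anc w (t.parent w)) :=
                    oddP3_flip3 DFSTree.anc_refl hself
                      (DFSTree.anc_iff_parent hzr huw)
                      (DFSTree.anc_iff_parent hzr hvw)
                  rw [hcr, ihp, not_not, hflip, not_not]
                · have heS : t.treeEdge z ∉ S := by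
                    intro hmem
                    have hmem' : t.treeEdge z = t.treeEdge u ∨ t.treeEdge z = t.treeEdge v ∨
                        t.treeEdge z = t.treeEdge w := by
                      simpa [hS, Set.mem_insert_iff] using hmem
                    rcases hmem' with h | h | h
                    · exact hzu (ht.treeEdge_inj _ _ hzr hu h)
                    · exact hzv (ht.treeEdge_inj _ _ hzr hv h)
                    · exact hzw (ht.treeEdge_inj _ _ hzr hw h)
                  have hio : Reach t.ends S t.root z ↔ Reach t.ends S t.root (t.parent z) :=
                    ⟨fun h => stepD _ heS (Or.inl (ht.tree_ends z hzr)) h,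
                     fun h => stepD _ heS (Or.inr (ht.tree_ends z hzr)) h⟩
                  have hcong : OddP3 (t.Anc u z) (t.Anc v z) (t.Anc w z) ↔
                      OddP3 (t.Anc u (t.parent z)) (t.Anc v (t.parent z))
                        (t.Anc w (t.parent z)) :=
                    oddP3_congr (DFSTree.anc_iff_parent hzr (Ne.symm hzu))
                      (DFSTree.anc_iff_parent hzr (Ne.symm hzv))
                      (DFSTree.anc_iff_parent hzr (Ne.symm hzw))
                  rw [hio, ihp, hcong]
    exact fun z => main (t.pre z) z le_rfl
  -- back-edge analysis at a cut vertex
  have hBE : ∀ x : V, x ≠ t.root →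
      ∃ d y : V, t.Anc x d ∧ t.Anc y x ∧ ¬ t.Anc x y ∧ (∀ m, t.Anc m y → t.Anc m d) ∧
        (OddP3 (t.Anc u d) (t.Anc v d) (t.Anc w d) ↔
          OddP3 (t.Anc u y) (t.Anc v y) (t.Anc w y)) := by
    intro x hxr
    obtain ⟨e, hnt, hd, hyx, hyne⟩ := DFSTree.exists_back ht h3 hxr
    have heS : e ∉ S := by
      intro hmem
      have hmem' : e = t.treeEdge u ∨ e = t.treeEdge v ∨ e = t.treeEdge w := by
        simpa [hS, Set.mem_insert_iff] using hmem
      rcases hmem' with rfl | rfl | rfl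
      · exact hnt ⟨u, hu, rfl⟩
      · exact hnt ⟨v, hv, rfl⟩
      · exact hnt ⟨w, hw, rfl⟩
    have hdy : Reach t.ends S t.root (t.ends e).1 ↔ Reach t.ends S t.root (t.ends e).2 :=
      ⟨fun h => stepD e heS (Or.inl rfl) h, fun h => stepD e heS (Or.inr rfl) h⟩
    have hiff : OddP3 (t.Anc u (t.ends e).1) (t.Anc v (t.ends e).1) (t.Anc w (t.ends e).1) ↔
        OddP3 (t.Anc u (t.ends e).2) (t.Anc v (t.ends e).2) (t.Anc w (t.ends e).2) :=
      not_iff_not.mp (((hparity (t.ends e).1).symm.trans hdy).trans (hparity (t.ends e).2))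
    have hxy : ¬ t.Anc x (t.ends e).2 := fun h =>
      hyne (DFSTree.anc_antisymm ht hyx h)
    exact ⟨(t.ends e).1, (t.ends e).2, hd, hyx, hxy,
      fun m hm => DFSTree.anc_trans (DFSTree.anc_trans hm hyx) hd, hiff⟩
  -- analysis at w : forces Anc w v
  obtain ⟨d, y, hwd, hyw, hwy, hmono, hx3⟩ := hBE w hw
  have hres : (t.Anc u d ∧ ¬ t.Anc u y) ∨ (t.Anc v d ∧ ¬ t.Anc v y) :=
    oddP3_extract3 hx3 hwd hwy (hmono u) (hmono v)
  have Hwv : t.Anc w v := by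
    rcases hres with ⟨hud, _⟩ | ⟨hvd, _⟩
    · rcases DFSTree.anc_total hud hwd with h | h
      · exact absurd (ht.pre_mono _ _ h) (by omega)
      · exact absurd h Hwu
    · rcases DFSTree.anc_total hvd hwd with h | h
      · exact absurd (ht.pre_mono _ _ h) (by omega)
      · exact h
  -- analysis at u : contradiction
  obtain ⟨d', y', hud', hyu, huy, hmono', hx3'⟩ := hBE u hu
  have hres' : (t.Anc v d' ∧ ¬ t.Anc v y') ∨ (t.Anc w d' ∧ ¬ t.Anc w y') :=
    oddP3_extract hx3' hud' huy (hmono' v) (hmono' w)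
  rcases hres' with ⟨hvd', _⟩ | ⟨hwd', _⟩
  · rcases DFSTree.anc_total hvd' hud' with h | h
    · exact Hwu (DFSTree.anc_trans Hwv h)
    · rcases DFSTree.anc_total h Hwv with h2 | h2
      · exact absurd (ht.pre_mono _ _ h2) (by omega)
      · exact Hwu h2
  · rcases DFSTree.anc_total hwd' hud' with h | h
    · exact Hwu h
    · exact absurd (ht.pre_mono _ _ h) (by omega)

end KeyLemma

/-- If `{(u, p(u)), (v, p(v)), (w, p(w))}` is a 3-edge cut of a 3-edge-connected
graph and `w` has the smallest preorder number among `u, v, w`, then `w` is an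
ancestor of both `u` and `v`. -/
theorem smallest_is_common_ancestor (t : DFSTree V E) (ht : t.IsDFS)
    (h3 : GraphKConn t.ends 3) (u v w : V)
    (hu : u ≠ t.root) (hv : v ≠ t.root) (hw : w ≠ t.root)
    (huv : u ≠ v) (huw : u ≠ w) (hvw : v ≠ w)
    (hcut : IsCutSet t.ends {t.treeEdge u, t.treeEdge v, t.treeEdge w})
    (hwu : t.pre w < t.pre u) (hwv : t.pre w < t.pre v) :
    t.Anc w u ∧ t.Anc w v := by
  have hsets : ({t.treeEdge v, t.treeEdge u, t.treeEdge w} : Set E) =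
      {t.treeEdge u, t.treeEdge v, t.treeEdge w} := Set.insert_comm _ _ _
  refine ⟨key_lemma t ht h3 u v w hu hv hw huv huw hvw hcut hwu hwv, ?_⟩
  exact key_lemma t ht h3 v u w hv hu hw (Ne.symm huv) hvw huw
    (by rw [hsets]; exact hcut) hwv hwu
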